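/- arXiv:math/0004118 — 5 statements merged into one kernel-verified Lean document; each statement's English description precedes it below -/
import Mathlib

section
/- Let α, β, γ, δ ∈ ℂ and let I ⊆ (0,∞) be an open interval. Let q : I → ℂ be twice differentiable with sinh(q(t)/2) ≠ 0 and cosh(q(t)/2) ≠ 0 for all t ∈ I, and define λ(t) = coth(q(t)/2)². Then λ satisfies the fifth Painlevé equation λ'' = (1/(2λ) + 1/(λ−1))(λ')² − λ'/t + (λ(λ−1)²/t²)(α + β/λ² + γt/(λ−1)² + δt²(λ+1)/(λ−1)³) on I if and only if q satisfies t²q''(t) + t q'(t) = −[ α·cosh(q/2)/sinh³(q/2) + β·sinh(q/2)/cosh³(q/2) + (γt/2)·sinh(q) + (δt²/4)·sinh(2q) ] on I. -/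
open Complex

set_option maxHeartbeats 1000000 in
private theorem key_alg (S C p P T a b g d : ℂ) (hS : S ≠ 0) (hC : C ≠ 0) (hT : T ≠ 0)
    (hrel : C ^ 2 - S ^ 2 = 1) :
    (-P * C / S ^ 3 - p ^ 2 / 2 * (S ^ 2 - 3 * C ^ 2) / S ^ 4 =
        (1 / (2 * (C / S) ^ 2) + 1 / ((C / S) ^ 2 - 1)) * (-p * C / S ^ 3) ^ 2
          - (-p * C / S ^ 3) / T
          + (C / S) ^ 2 * ((C / S) ^ 2 - 1) ^ 2 / T ^ 2 *
              (a + b / ((C / S) ^ 2) ^ 2 + g * T / ((C / S) ^ 2 - 1) ^ 2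
                + d * T ^ 2 * ((C / S) ^ 2 + 1) / ((C / S) ^ 2 - 1) ^ 3))
      ↔
    (T ^ 2 * P + T * p =
        -(a * C / S ^ 3 + b * S / C ^ 3 + g * T / 2 * (2 * S * C)
          + d * T ^ 2 / 4 * (2 * (2 * S * C) * (2 * C ^ 2 - 1)))) := by
  have e1 : (C / S) ^ 2 - 1 = 1 / S ^ 2 := by
    field_simp
    linear_combination hrel
  have hD : (2 * C ^ 2 * (S ^ 3) ^ 2 * (S ^ 3 * T) *
      (S ^ 2 * (S ^ 2) ^ 2 * T ^ 2 * ((C ^ 2) ^ 2 * S ^ 2))) ≠ 0 := by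
    simp [hS, hC, hT]
  rw [e1]
  constructor
  · intro h
    field_simp [hS, hC, hT] at h ⊢
    have hscale : S ^ 18 * T * C ^ 4 ≠ 0 := by
      simp [hS, hC, hT]
    apply mul_left_cancel₀ hscale
    linear_combination (S ^ 18 * T * C ^ 4) * ((-2 : ℂ) * h +
      ((4 : ℂ) * C ^ 4 * S ^ 4 * T ^ 2 * d + (2 : ℂ) * p ^ 2 * C ^ 2 * S ^ 2 * T ^ 2) * hrel)
  · intro h
    field_simp [hS, hC, hT] at h ⊢
    linear_combination ((-1 : ℂ)/2) * h +
      ((2 : ℂ) * C ^ 4 * S ^ 4 * T ^ 2 * d + p ^ 2 * C ^ 2 * S ^ 2 * T ^ 2) * hrel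

set_option maxHeartbeats 1000000 in
/-- The Painlevé–Calogero correspondence for P_V: with λ = coth²(q/2), the function λ
satisfies the fifth Painlevé equation iff q satisfies the Newtonian equation
t²q'' + tq' = -∂V/∂q for the hyperbolic Inozemtsev potential. -/
theorem painleve_V_calogero_correspondence
    (α β γ δ : ℂ) (I : Set ℝ) (hI : IsOpen I) (hIpos : I ⊆ Set.Ioi (0 : ℝ))
    (q q' q'' : ℝ → ℂ)
    (hq : ∀ t ∈ I, HasDerivAt q (q' t) t)
    (hq' : ∀ t ∈ I, HasDerivAt q' (q'' t) t)
    (hsinh : ∀ t ∈ I, Complex.sinh (q t / 2) ≠ 0)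
    (hcosh : ∀ t ∈ I, Complex.cosh (q t / 2) ≠ 0)
    (lam : ℝ → ℂ)
    (hlam : ∀ t, lam t = (Complex.cosh (q t / 2) / Complex.sinh (q t / 2)) ^ 2) :
    (∀ t ∈ I,
        deriv (deriv lam) t =
          (1 / (2 * lam t) + 1 / (lam t - 1)) * deriv lam t ^ 2
            - deriv lam t / (t : ℂ)
            + lam t * (lam t - 1) ^ 2 / (t : ℂ) ^ 2 *
                (α + β / lam t ^ 2 + γ * (t : ℂ) / (lam t - 1) ^ 2
                  + δ * (t : ℂ) ^ 2 * (lam t + 1) / (lam t - 1) ^ 3))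
      ↔
    (∀ t ∈ I,
        (t : ℂ) ^ 2 * q'' t + (t : ℂ) * q' t =
          -(α * Complex.cosh (q t / 2) / Complex.sinh (q t / 2) ^ 3
            + β * Complex.sinh (q t / 2) / Complex.cosh (q t / 2) ^ 3
            + γ * (t : ℂ) / 2 * Complex.sinh (q t)
            + δ * (t : ℂ) ^ 2 / 4 * Complex.sinh (2 * q t))) := by
  have hCd : ∀ t ∈ I, HasDerivAt (fun t => Complex.cosh (q t / 2))
      (Complex.sinh (q t / 2) * (q' t / 2)) t := fun t ht =>
    (Complex.hasDerivAt_cosh _).comp t ((hq t ht).div_const 2)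
  have hSd : ∀ t ∈ I, HasDerivAt (fun t => Complex.sinh (q t / 2))
      (Complex.cosh (q t / 2) * (q' t / 2)) t := fun t ht =>
    (Complex.hasDerivAt_sinh _).comp t ((hq t ht).div_const 2)
  set L : ℝ → ℂ := fun t => -q' t * Complex.cosh (q t / 2) / Complex.sinh (q t / 2) ^ 3
    with hLdef
  have hlamd : ∀ t ∈ I, HasDerivAt lam (L t) t := by
    intro t ht
    have h0 := ((hasDerivAt_pow 2 (Complex.cosh (q t / 2) / Complex.sinh (q t / 2))).comp t
      ((hCd t ht).div (hSd t ht) (hsinh t ht)))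
    have heq : lam = fun t => (Complex.cosh (q t / 2) / Complex.sinh (q t / 2)) ^ 2 :=
      funext hlam
    rw [heq, hLdef]
    refine h0.congr_deriv ?_
    symm
    beta_reduce
    have hrel := Complex.cosh_sq_sub_sinh_sq (q t / 2)
    have hs0 := hsinh t ht
    simp only [Nat.cast_ofNat, Nat.add_one_sub_one, pow_one]
    field_simp
    linear_combination (q' t * Complex.cosh (q t / 2)) * hrel
  set M : ℝ → ℂ := fun t => -q'' t * Complex.cosh (q t / 2) / Complex.sinh (q t / 2) ^ 3
    - q' t ^ 2 / 2 * (Complex.sinh (q t / 2) ^ 2 - 3 * Complex.cosh (q t / 2) ^ 2)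
      / Complex.sinh (q t / 2) ^ 4 with hMdef
  have hLd : ∀ t ∈ I, HasDerivAt L (M t) t := by
    intro t ht
    have hnum : HasDerivAt (fun t => -q' t * Complex.cosh (q t / 2))
        (-q'' t * Complex.cosh (q t / 2)
          + -q' t * (Complex.sinh (q t / 2) * (q' t / 2))) t :=
      ((hq' t ht).neg).mul (hCd t ht)
    have hden : HasDerivAt (fun t => Complex.sinh (q t / 2) ^ 3)
        ((3 : ℕ) * Complex.sinh (q t / 2) ^ (3 - 1) * (Complex.cosh (q t / 2) * (q' t / 2))) t :=
      (hSd t ht).pow 3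
    have h0 := hnum.div hden (pow_ne_zero 3 (hsinh t ht))
    rw [hLdef, hMdef]
    refine h0.congr_deriv ?_
    symm
    have hs0 := hsinh t ht
    field_simp
    ring
  have hderiv1 : ∀ t ∈ I, deriv lam t = L t := fun t ht => (hlamd t ht).deriv
  have hderiv2 : ∀ t ∈ I, deriv (deriv lam) t = M t := by
    intro t ht
    have hev : deriv lam =ᶠ[nhds t] L :=
      Filter.eventuallyEq_of_mem (hI.mem_nhds ht) (fun x hx => hderiv1 x hx)
    rw [hev.deriv_eq]
    exact (hLd t ht).deriv
  have hsinhq : ∀ t : ℝ, Complex.sinh (q t) =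
      2 * Complex.sinh (q t / 2) * Complex.cosh (q t / 2) := by
    intro t
    conv_lhs => rw [show q t = 2 * (q t / 2) by ring]
    rw [Complex.sinh_two_mul]
  have hsinh2q : ∀ t : ℝ, Complex.sinh (2 * q t) =
      2 * (2 * Complex.sinh (q t / 2) * Complex.cosh (q t / 2))
        * (2 * Complex.cosh (q t / 2) ^ 2 - 1) := by
    intro t
    rw [Complex.sinh_two_mul, hsinhq t]
    congr 1
    conv_lhs => rw [show q t = 2 * (q t / 2) by ring]
    rw [Complex.cosh_two_mul]
    linear_combination -Complex.cosh_sq_sub_sinh_sq (q t / 2)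
  have hmain : ∀ t ∈ I,
      (deriv (deriv lam) t =
          (1 / (2 * lam t) + 1 / (lam t - 1)) * deriv lam t ^ 2
            - deriv lam t / (t : ℂ)
            + lam t * (lam t - 1) ^ 2 / (t : ℂ) ^ 2 *
                (α + β / lam t ^ 2 + γ * (t : ℂ) / (lam t - 1) ^ 2
                  + δ * (t : ℂ) ^ 2 * (lam t + 1) / (lam t - 1) ^ 3))
        ↔
      ((t : ℂ) ^ 2 * q'' t + (t : ℂ) * q' t =
          -(α * Complex.cosh (q t / 2) / Complex.sinh (q t / 2) ^ 3
            + β * Complex.sinh (q t / 2) / Complex.cosh (q t / 2) ^ 3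
            + γ * (t : ℂ) / 2 * Complex.sinh (q t)
            + δ * (t : ℂ) ^ 2 / 4 * Complex.sinh (2 * q t))) := by
    intro t ht
    have ht0 : (t : ℂ) ≠ 0 := by
      exact_mod_cast ne_of_gt (hIpos ht)
    rw [hderiv2 t ht, hderiv1 t ht, hlam t, hsinhq t, hsinh2q t, hMdef, hLdef]
    exact key_alg (Complex.sinh (q t / 2)) (Complex.cosh (q t / 2)) (q' t) (q'' t) (t : ℂ)
      α β γ δ (hsinh t ht) (hcosh t ht) ht0 (Complex.cosh_sq_sub_sinh_sq (q t / 2))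
  constructor
  · intro h t ht
    exact (hmain t ht).mp (h t ht)
  · intro h t ht
    exact (hmain t ht).mpr (h t ht)
end

section
/- Let κ₀, θ∞ ∈ ℂ and set α = 2θ∞ − κ₀ + 1 and β = −2κ₀². Let I ⊆ ℝ be an open interval and let q, p : I → ℂ be differentiable with q(t) ≠ 0 on I, satisfying the Hamiltonian system q'(t) = p(t) and p'(t) = (3/2)(q/2)⁵ + 4t(q/2)³ + 2(t² − α)(q/2) + β(q/2)⁻³ (the canonical equations q' = ∂𝓗/∂p, p' = −∂𝓗/∂q for 𝓗(q,p,t) = p²/2 − (1/2)(q/2)⁶ − 2t(q/2)⁴ − 2(t² − α)(q/2)² + β(q/2)⁻²). Define λ(t) = (q(t)/2)² and μ(t) = p(t)/(2q(t)) + (1/4)( λ(t) + 2t + 2κ₀/λ(t) ). Then λ and μ are differentiable on I and satisfy λ'(t) = (∂H/∂μ)(λ(t),μ(t),t) and μ'(t) = −(∂H/∂λ)(λ(t),μ(t),t) for the polynomial P_IV Hamiltonian H(λ,μ,t) = 2λ·[ μ² − ( λ/2 + t + κ₀/λ )·μ + θ∞/2 ]. -/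
open Complex

lemma dHm_aux (l c d m0 : ℂ) :
    deriv (fun m : ℂ => 2 * l * (m ^ 2 - c * m + d)) m0 = 2 * l * (2 * m0 - c) := by
  have h1 : HasDerivAt (fun m : ℂ => m ^ 2 - c * m + d) (2 * m0 - c) m0 := by
    have h := ((hasDerivAt_pow 2 m0).sub ((hasDerivAt_id m0).const_mul c)).add_const d
    simp only [Pi.add_def, Pi.sub_def, id] at h
    exact h.congr_deriv (by push_cast; ring)
  have h2 := h1.const_mul (2 * l)
  exact h2.deriv

lemma dHl_aux (κ₀ θinf m : ℂ) (t : ℝ) (l0 : ℂ) (hl : l0 ≠ 0) :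
    deriv (fun l : ℂ => 2 * l * (m ^ 2 - (l / 2 + (t : ℂ) + κ₀ / l) * m + θinf / 2)) l0
      = 2 * m ^ 2 - 2 * l0 * m - 2 * (t : ℂ) * m + θinf := by
  have hev : (fun l : ℂ => 2 * l * (m ^ 2 - (l / 2 + (t : ℂ) + κ₀ / l) * m + θinf / 2))
      =ᶠ[nhds l0] (fun l : ℂ => 2 * l * m ^ 2 - l ^ 2 * m - 2 * (t : ℂ) * l * m
        - 2 * κ₀ * m + θinf * l) := by
    filter_upwards [eventually_ne_nhds hl] with x hx
    field_simp
    ring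
  rw [hev.deriv_eq]
  have h1 : HasDerivAt (fun l : ℂ => 2 * l * m ^ 2 - l ^ 2 * m - 2 * (t : ℂ) * l * m
      - 2 * κ₀ * m + θinf * l)
      (2 * m ^ 2 - 2 * l0 * m - 2 * (t : ℂ) * m + θinf) l0 := by
    have h := ((((((hasDerivAt_id l0).const_mul (2 * m ^ 2)).sub
        (((hasDerivAt_pow 2 l0).const_mul m))).sub
        ((hasDerivAt_id l0).const_mul (2 * (t : ℂ) * m))).sub_const (2 * κ₀ * m)).add
        ((hasDerivAt_id l0).const_mul θinf))
    simp only [Pi.add_def, Pi.sub_def, id] at h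
    have hfun : (fun l : ℂ => 2 * l * m ^ 2 - l ^ 2 * m - 2 * (t : ℂ) * l * m - 2 * κ₀ * m + θinf * l)
        = (fun i => 2 * m ^ 2 * i - m * i ^ 2 - 2 * (t : ℂ) * m * i - 2 * κ₀ * m + θinf * i) := by
      funext x; ring
    rw [hfun]; exact h.congr_deriv (by push_cast; ring)
  exact h1.deriv

set_option maxHeartbeats 2000000 in
/-- The canonical transformation from the Calogero side of P_IV (rational Inozemtsev
model, rank one) to the polynomial Hamiltonian form of P_IV. -/
theorem PIV_canonical_transformation
    (κ₀ θinf α β : ℂ)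
    (hα : α = 2 * θinf - κ₀ + 1) (hβ : β = -2 * κ₀ ^ 2)
    (I : Set ℝ) (hI : IsOpen I)
    (q p q' p' : ℝ → ℂ)
    (hq : ∀ t ∈ I, HasDerivAt q (q' t) t)
    (hp : ∀ t ∈ I, HasDerivAt p (p' t) t)
    (hqne : ∀ t ∈ I, q t ≠ 0)
    (heq1 : ∀ t ∈ I, q' t = p t)
    (heq2 : ∀ t ∈ I, p' t =
        (3 / 2) * (q t / 2) ^ 5 + 4 * (t : ℂ) * (q t / 2) ^ 3
          + 2 * ((t : ℂ) ^ 2 - α) * (q t / 2) + β / (q t / 2) ^ 3)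
    (lam mu : ℝ → ℂ)
    (hlam : ∀ t, lam t = (q t / 2) ^ 2)
    (hmu : ∀ t, mu t = p t / (2 * q t)
        + (lam t + 2 * (t : ℂ) + 2 * κ₀ / lam t) / 4)
    (H : ℂ → ℂ → ℝ → ℂ)
    (hH : ∀ l m t, H l m t = 2 * l *
        (m ^ 2 - (l / 2 + (t : ℂ) + κ₀ / l) * m + θinf / 2)) :
    ∀ t ∈ I,
      HasDerivAt lam (deriv (fun m => H (lam t) m t) (mu t)) t ∧
      HasDerivAt mu (-deriv (fun l => H l (mu t) t) (lam t)) t := by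
  intro t ht
  have hq0 : q t ≠ 0 := hqne t ht
  have hq20 : q t / 2 ≠ 0 := div_ne_zero hq0 two_ne_zero
  have hl0 : lam t ≠ 0 := by rw [hlam]; exact pow_ne_zero 2 hq20
  have hqd := hq t ht
  have hpd := hp t ht
  have hlamf : lam = fun s => (q s / 2) ^ 2 := funext hlam
  have hlamD : HasDerivAt lam (q' t / 2 * (q t / 2) + q t / 2 * (q' t / 2)) t := by
    rw [hlamf]
    simp only [pow_two]
    exact (hqd.div_const 2).mul (hqd.div_const 2)
  constructor
  · have hdm : deriv (fun m => H (lam t) m t) (mu t)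
        = 2 * lam t * (2 * mu t - (lam t / 2 + (t : ℂ) + κ₀ / lam t)) := by
      simp only [hH]
      exact dHm_aux _ _ _ _
    rw [hdm]
    have hval : q' t / 2 * (q t / 2) + q t / 2 * (q' t / 2)
        = 2 * lam t * (2 * mu t - (lam t / 2 + (t : ℂ) + κ₀ / lam t)) := by
      rw [hmu, hlam, heq1 t ht]
      field_simp
      ring_nf
    exact hval ▸ hlamD
  · have hdl : deriv (fun l => H l (mu t) t) (lam t)
        = 2 * (mu t) ^ 2 - 2 * lam t * mu t - 2 * (t : ℂ) * mu t + θinf := by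
      simp only [hH]
      exact dHl_aux _ _ _ _ _ hl0
    rw [hdl]
    have hmuf : mu = fun s => p s / (2 * q s)
        + ((q s / 2) ^ 2 + 2 * (s : ℂ) + 2 * κ₀ / (q s / 2) ^ 2) / 4 := by
      funext s; rw [hmu s, hlam s]
    have h2q : HasDerivAt (fun s => 2 * q s) (2 * q' t) t := hqd.const_mul 2
    have h2q0 : 2 * q t ≠ 0 := mul_ne_zero two_ne_zero hq0
    have hA : HasDerivAt (fun s => p s / (2 * q s))
        ((p' t * (2 * q t) - p t * (2 * q' t)) / (2 * q t) ^ 2) t := hpd.div h2q h2q0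
    have hB : HasDerivAt (fun s => (q s / 2) ^ 2)
        (q' t / 2 * (q t / 2) + q t / 2 * (q' t / 2)) t := by
      simp only [pow_two]
      exact (hqd.div_const 2).mul (hqd.div_const 2)
    have hC : HasDerivAt (fun s : ℝ => 2 * (s : ℂ)) 2 t := by
      have h := Complex.ofRealCLM.hasDerivAt (x := t)
      simpa using h.const_mul (2 : ℂ)
    have hD : HasDerivAt (fun s => 2 * κ₀ / (q s / 2) ^ 2)
        ((0 * (q t / 2) ^ 2 - 2 * κ₀ * (q' t / 2 * (q t / 2) + q t / 2 * (q' t / 2)))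
          / ((q t / 2) ^ 2) ^ 2) t :=
      (hasDerivAt_const t (2 * κ₀)).div hB (pow_ne_zero 2 hq20)
    have hmuD := (hA.add (((hB.add hC).add hD).div_const 4))
    have hmuD := hmuD.congr_of_eventuallyEq (f₁ := mu)
      (Filter.Eventually.of_forall (fun s => by rw [hmuf]; rfl))
    have hmu1 : mu t = (8 * p t * q t + q t ^ 4 + 8 * (t : ℂ) * q t ^ 2 + 32 * κ₀)
        / (16 * q t ^ 2) := by
      rw [hmu t, hlam t]
      field_simp [hq0]
      ring
    refine hmuD.congr_deriv (Eq.symm ?_)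
    rw [hmu1, hlam, heq1 t ht, heq2 t ht, hα, hβ]
    field_simp [hq0]
    ring
end

section
/- Let α ∈ ℂ, let I ⊆ ℝ be an open interval, and let q, p : I → ℂ be differentiable, satisfying the Hamiltonian system q'(t) = p(t) and p'(t) = 2q(t)(q(t)² + t/2) + α (the canonical equations q' = ∂𝓗/∂p, p' = −∂𝓗/∂q for 𝓗(q,p,t) = p²/2 − (1/2)(q² + t/2)² − αq). Define λ(t) = q(t) and μ(t) = p(t) + q(t)² + t/2. Then λ and μ satisfy λ'(t) = μ(t) − (λ(t)² + t/2) and μ'(t) = 2λ(t)μ(t) + α + 1/2, i.e., the canonical equations λ' = ∂H/∂μ, μ' = −∂H/∂λ for the polynomial P_II Hamiltonian H(λ,μ,t) = μ²/2 − (λ² + t/2)μ − (α + 1/2)λ. -/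
open Complex

/-- The canonical transformation from the Calogero side of P_II to the polynomial
Hamiltonian form of P_II. -/
theorem PII_canonical_transformation
    (α : ℂ) (I : Set ℝ) (hI : IsOpen I)
    (q p q' p' : ℝ → ℂ)
    (hq : ∀ t ∈ I, HasDerivAt q (q' t) t)
    (hp : ∀ t ∈ I, HasDerivAt p (p' t) t)
    (heq1 : ∀ t ∈ I, q' t = p t)
    (heq2 : ∀ t ∈ I, p' t = 2 * q t * (q t ^ 2 + (t : ℂ) / 2) + α)
    (lam mu : ℝ → ℂ)
    (hlam : ∀ t, lam t = q t)
    (hmu : ∀ t, mu t = p t + q t ^ 2 + (t : ℂ) / 2) :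
    ∀ t ∈ I,
      HasDerivAt lam (mu t - (lam t ^ 2 + (t : ℂ) / 2)) t ∧
      HasDerivAt mu (2 * lam t * mu t + α + 1 / 2) t := by
  have hlamf : lam = q := funext hlam
  have hmuf : mu = fun t => p t + q t ^ 2 + (t : ℂ) / 2 := funext hmu
  intro t ht
  constructor
  · have : mu t - (lam t ^ 2 + (t : ℂ) / 2) = q' t := by
      rw [hmu, hlam, heq1 t ht]; ring
    rw [this, hlamf]
    exact hq t ht
  · have hofR : HasDerivAt (fun s : ℝ => (s : ℂ)) 1 t := by
      exact (hasDerivAt_id t).ofReal_comp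
    have h : HasDerivAt (fun s => p s + q s ^ 2 + (s : ℂ) / 2)
        (p' t + 2 * q t * q' t + 1 / 2) t := by
      have h2 : HasDerivAt (fun s => q s ^ 2) (2 * q t * q' t) t := by
        have := ((hq t ht).mul (hq t ht) : HasDerivAt (fun s => q s * q s) _ t)
        have e : q' t * q t + q t * q' t = 2 * q t * q' t := by ring
        simp only [sq]; rw [← e]; exact this
      exact ((hp t ht).add h2).add (hofR.div_const 2)
    have heq : p' t + 2 * q t * q' t + 1 / 2 = 2 * lam t * mu t + α + 1 / 2 := by
      rw [heq2 t ht, heq1 t ht, hlam, hmu]; ring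
    rw [← heq, hmuf]
    exact h
end

section
/- Fix an integer ℓ ≥ 1 and constants α, g ∈ ℂ. Let I ⊆ ℝ be an open interval and let q_j, p_j : I → ℂ (j = 1,…,ℓ) be differentiable with q_j ≠ q_k on I for each j ≠ k. Suppose they satisfy the canonical equations q_j' = (∂𝓗/∂p_j) and p_j' = −(∂𝓗/∂q_j) for the Hamiltonian 𝓗(q,p,t) = Σ_{j=1}^{ℓ} [ p_j²/2 − (1/2)(q_j² + t/2)² − αq_j ] + g² Σ_{j≠k} 1/(q_j−q_k)². Define λ_j = q_j and μ_j = p_j + q_j² + t/2. Then the λ_j, μ_j satisfy the canonical equations λ_j' = (∂H/∂μ_j) and μ_j' = −(∂H/∂λ_j) for the multi-component P_II Hamiltonian H(λ,μ,t) = Σ_{j=1}^{ℓ} [ μ_j²/2 − (λ_j² + t/2)μ_j − (α + 1/2)λ_j ] + g² Σ_{j≠k} 1/(λ_j−λ_k)². -/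
open Complex

lemma sum_update_split {ℓ : ℕ} (j : Fin ℓ) (G : Fin ℓ → ℂ → ℂ) (f : Fin ℓ → ℂ) (x : ℂ) :
    ∑ i, G i (Function.update f j x i)
      = G j x + ∑ i ∈ Finset.univ.erase j, G i (f i) := by
  rw [← Finset.add_sum_erase _ _ (Finset.mem_univ j), Function.update_self]
  refine congrArg _ (Finset.sum_congr rfl fun i hi => ?_)
  rw [Function.update_of_ne (Finset.ne_of_mem_erase hi)]

noncomputable def Wfun (ℓ : ℕ) (g : ℂ) (j : Fin ℓ) (Q : Fin ℓ → ℂ) : ℂ → ℂ :=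
  fun x => g ^ 2 * ∑ a, ∑ b,
    (if a ≠ b then 1 / (Function.update Q j x a - Function.update Q j x b) ^ 2 else 0)

lemma Wfun_diff (ℓ : ℕ) (g : ℂ) (j : Fin ℓ) (Q : Fin ℓ → ℂ)
    (hd : ∀ a b, a ≠ b → Q a ≠ Q b) :
    DifferentiableAt ℂ (Wfun ℓ g j Q) (Q j) := by
  have h1 : ∀ c : Fin ℓ, DifferentiableAt ℂ (fun x : ℂ => Function.update Q j x c) (Q j) := by
    intro c
    by_cases hc : c = j
    · subst hc
      simp only [Function.update_self]
      exact differentiableAt_id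
    · simp only [Function.update_of_ne hc]
      exact differentiableAt_const _
  apply DifferentiableAt.const_mul
  refine DifferentiableAt.fun_sum fun a _ => DifferentiableAt.fun_sum fun b _ => ?_
  by_cases hab : a = b
  · simp [hab]
  · have hne : Function.update Q j (Q j) a - Function.update Q j (Q j) b ≠ 0 := by
      rw [Function.update_eq_self]
      exact sub_ne_zero.mpr (hd a b hab)
    have hdd : DifferentiableAt ℂ
        (fun x : ℂ => 1 / (Function.update Q j x a - Function.update Q j x b) ^ 2) (Q j) := by
      simp only [one_div]
      exact (((h1 a).sub (h1 b)).pow 2).inv (pow_ne_zero 2 hne)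
    simpa [hab] using hdd

lemma deriv_sq_half_add (C y : ℂ) : deriv (fun x : ℂ => x ^ 2 / 2 + C) y = y := by
  have h := ((hasDerivAt_pow 2 y).div_const 2).add_const C
  have h2 : HasDerivAt (fun x : ℂ => x ^ 2 / 2 + C) y y := by
    exact h.congr_deriv (by norm_num <;> ring)
  exact h2.deriv

lemma deriv_quad_simple (c C y : ℂ) :
    deriv (fun x : ℂ => x ^ 2 / 2 - c * x + C) y = y - c := by
  have h := (((hasDerivAt_pow 2 y).div_const 2).sub ((hasDerivAt_id' (x := y)).const_mul c)).add_const C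
  have h2 : HasDerivAt (fun x : ℂ => x ^ 2 / 2 - c * x + C) (y - c) y := by
    exact h.congr_deriv (by norm_num <;> ring)
  exact h2.deriv

lemma deriv_quartic (d a C : ℂ) (Wf : ℂ → ℂ) (y : ℂ) (hW : DifferentiableAt ℂ Wf y) :
    deriv (fun x : ℂ => -(1 / 2 * (x ^ 2 + d) ^ 2) - a * x + C + Wf x) y
      = -(2 * y * (y ^ 2 + d)) - a + deriv Wf y := by
  have h := (((((((hasDerivAt_pow 2 y).add_const d).pow 2).const_mul (1/2 : ℂ)).neg).sub
      ((hasDerivAt_id' (x := y)).const_mul a)).add_const C).add hW.hasDerivAt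
  have h2 : HasDerivAt (fun x : ℂ => -(1 / 2 * (x ^ 2 + d) ^ 2) - a * x + C + Wf x)
      (-(2 * y * (y ^ 2 + d)) - a + deriv Wf y) y := by
    exact h.congr_deriv (by norm_num <;> ring)
  exact h2.deriv

lemma deriv_quad_mul (d c e C : ℂ) (Wf : ℂ → ℂ) (y : ℂ) (hW : DifferentiableAt ℂ Wf y) :
    deriv (fun x : ℂ => -((x ^ 2 + d) * c) - e * x + C + Wf x) y
      = -(2 * y * c) - e + deriv Wf y := by
  have h := ((((((hasDerivAt_pow 2 y).add_const d).mul_const c).neg).sub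
      ((hasDerivAt_id' (x := y)).const_mul e)).add_const C).add hW.hasDerivAt
  have h2 : HasDerivAt (fun x : ℂ => -((x ^ 2 + d) * c) - e * x + C + Wf x)
      (-(2 * y * c) - e + deriv Wf y) y := by
    exact h.congr_deriv (by norm_num <;> ring)
  exact h2.deriv



open Complex

/-- The canonical transformation from the rank-ℓ second rational model to the
multi-component second Painlevé equation. -/
theorem multi_component_PII
    (ℓ : ℕ) (hℓ : 1 ≤ ℓ) (α g : ℂ)
    (I : Set ℝ) (hI : IsOpen I)
    (q p q' p' : Fin ℓ → ℝ → ℂ)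
    (hq : ∀ j, ∀ t ∈ I, HasDerivAt (q j) (q' j t) t)
    (hp : ∀ j, ∀ t ∈ I, HasDerivAt (p j) (p' j t) t)
    (hd : ∀ j k, j ≠ k → ∀ t ∈ I, q j t ≠ q k t)
    (𝓗 : (Fin ℓ → ℂ) → (Fin ℓ → ℂ) → ℝ → ℂ)
    (h𝓗 : ∀ Q P t, 𝓗 Q P t =
        (∑ j, (P j ^ 2 / 2 - (1 / 2) * (Q j ^ 2 + (t : ℂ) / 2) ^ 2 - α * Q j))
        + g ^ 2 * ∑ j, ∑ k,
            (if j ≠ k then 1 / (Q j - Q k) ^ 2 else 0))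
    (hham1 : ∀ j, ∀ t ∈ I, q' j t =
        deriv (fun x => 𝓗 (fun i => q i t) (Function.update (fun i => p i t) j x) t)
          (p j t))
    (hham2 : ∀ j, ∀ t ∈ I, p' j t =
        -deriv (fun x => 𝓗 (Function.update (fun i => q i t) j x) (fun i => p i t) t)
          (q j t))
    (lam mu : Fin ℓ → ℝ → ℂ)
    (hlam : ∀ j t, lam j t = q j t)
    (hmu : ∀ j t, mu j t = p j t + q j t ^ 2 + (t : ℂ) / 2)
    (H : (Fin ℓ → ℂ) → (Fin ℓ → ℂ) → ℝ → ℂ)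
    (hH : ∀ L M t, H L M t =
        (∑ j, (M j ^ 2 / 2 - (L j ^ 2 + (t : ℂ) / 2) * M j - (α + 1 / 2) * L j))
        + g ^ 2 * ∑ j, ∑ k,
            (if j ≠ k then 1 / (L j - L k) ^ 2 else 0)) :
    ∀ j, ∀ t ∈ I,
      HasDerivAt (lam j)
        (deriv (fun x => H (fun i => lam i t) (Function.update (fun i => mu i t) j x) t)
          (mu j t)) t
      ∧ HasDerivAt (mu j)
        (-deriv (fun x => H (Function.update (fun i => lam i t) j x) (fun i => mu i t) t)
          (lam j t)) t := by
  intro j t ht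
  have hdQ : ∀ a b : Fin ℓ, a ≠ b → q a t ≠ q b t := fun a b hab => hd a b hab t ht
  have hW : DifferentiableAt ℂ (Wfun ℓ g j (fun i => q i t)) (q j t) :=
    Wfun_diff ℓ g j (fun i => q i t) hdQ
  -- compute q' j t
  have hq' : q' j t = p j t := by
    rw [hham1 j t ht]
    have e1 : (fun x => 𝓗 (fun i => q i t) (Function.update (fun i => p i t) j x) t)
        = fun x => x ^ 2 / 2 +
            ((∑ i ∈ Finset.univ.erase j,
                (p i t ^ 2 / 2 - 1 / 2 * (q i t ^ 2 + (t : ℂ) / 2) ^ 2 - α * q i t))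
              + (-(1 / 2 * (q j t ^ 2 + (t : ℂ) / 2) ^ 2) - α * q j t)
              + g ^ 2 * ∑ a, ∑ b, (if a ≠ b then 1 / (q a t - q b t) ^ 2 else 0)) := by
      funext x
      rw [h𝓗, sum_update_split j
        (fun i y => y ^ 2 / 2 - 1 / 2 * (q i t ^ 2 + (t : ℂ) / 2) ^ 2 - α * q i t)
        (fun i => p i t) x]
      ring
    rw [e1, deriv_sq_half_add]
  -- compute p' j t
  have hp' : p' j t = 2 * q j t * (q j t ^ 2 + (t : ℂ) / 2) + α
      - deriv (Wfun ℓ g j (fun i => q i t)) (q j t) := by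
    rw [hham2 j t ht]
    have e4 : (fun x => 𝓗 (Function.update (fun i => q i t) j x) (fun i => p i t) t)
        = fun x => -(1 / 2 * (x ^ 2 + (t : ℂ) / 2) ^ 2) - α * x +
            ((∑ i ∈ Finset.univ.erase j,
                (p i t ^ 2 / 2 - 1 / 2 * (q i t ^ 2 + (t : ℂ) / 2) ^ 2 - α * q i t))
              + p j t ^ 2 / 2)
            + Wfun ℓ g j (fun i => q i t) x := by
      funext x
      rw [h𝓗, sum_update_split j
        (fun i y => p i t ^ 2 / 2 - 1 / 2 * (y ^ 2 + (t : ℂ) / 2) ^ 2 - α * y)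
        (fun i => q i t) x]
      simp only [Wfun]
      ring
    rw [e4, deriv_quartic _ _ _ _ _ hW]
    ring
  refine ⟨?_, ?_⟩
  · -- first canonical equation
    have e2 : (fun x => H (fun i => lam i t) (Function.update (fun i => mu i t) j x) t)
        = fun x => x ^ 2 / 2 - (q j t ^ 2 + (t : ℂ) / 2) * x +
            ((∑ i ∈ Finset.univ.erase j,
                (mu i t ^ 2 / 2 - (q i t ^ 2 + (t : ℂ) / 2) * mu i t - (α + 1 / 2) * q i t))
              + (-(α + 1 / 2) * q j t)
              + g ^ 2 * ∑ a, ∑ b, (if a ≠ b then 1 / (q a t - q b t) ^ 2 else 0)) := by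
      funext x
      rw [hH]
      simp only [hlam]
      rw [sum_update_split j
        (fun i y => y ^ 2 / 2 - (q i t ^ 2 + (t : ℂ) / 2) * y - (α + 1 / 2) * q i t)
        (fun i => mu i t) x]
      ring
    rw [e2, deriv_quad_simple, hmu j t]
    have hlj : lam j = q j := funext fun s => hlam j s
    rw [hlj]
    have h := hq j t ht
    rw [hq'] at h
    convert h using 1
    ring
  · -- second canonical equation
    have e3 : (fun x => H (Function.update (fun i => lam i t) j x) (fun i => mu i t) t)
        = fun x => -((x ^ 2 + (t : ℂ) / 2) * mu j t) - (α + 1 / 2) * x +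
            ((∑ i ∈ Finset.univ.erase j,
                (mu i t ^ 2 / 2 - (q i t ^ 2 + (t : ℂ) / 2) * mu i t - (α + 1 / 2) * q i t))
              + mu j t ^ 2 / 2)
            + Wfun ℓ g j (fun i => q i t) x := by
      funext x
      rw [hH]
      simp only [hlam]
      rw [sum_update_split j
        (fun i y => mu i t ^ 2 / 2 - (y ^ 2 + (t : ℂ) / 2) * mu i t - (α + 1 / 2) * y)
        (fun i => q i t) x]
      simp only [Wfun]
      ring
    rw [show lam j t = q j t from hlam j t, e3, deriv_quad_mul _ _ _ _ _ _ hW]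
    have hmuf : mu j = fun s : ℝ => p j s + q j s ^ 2 + (s : ℂ) / 2 :=
      funext fun s => hmu j s
    rw [hmuf]
    have hre : HasDerivAt (fun s : ℝ => ((s : ℂ) / 2)) ((1 : ℂ) / 2) t := by
      have h := (Complex.ofRealCLM.hasDerivAt (x := t)).div_const (2 : ℂ)
      simpa using h
    have hsq : HasDerivAt (fun s : ℝ => q j s ^ 2) (2 * q j t * q' j t) t := by
      have h2 := (hq j t ht).mul (hq j t ht)
      have e : (fun s : ℝ => q j s ^ 2) = fun s => q j s * q j s := by
        funext s; ring
      rw [e]; exact h2.congr_deriv (by ring)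
    have h := ((hp j t ht).add hsq).add hre
    refine h.congr_deriv ?_
    rw [hq', hp']
    beta_reduce
    ring
end

section
/- Let q, r ∈ ℂ with sinh(q/2) ≠ 0, sinh(r/2) ≠ 0, sinh((q−r)/2) ≠ 0 and sinh((q+r)/2) ≠ 0, and set λ = coth²(q/2) and ρ = coth²(r/2). Then λ ≠ ρ and 1/sinh²((q−r)/2) + 1/sinh²((q+r)/2) = 2(λ−1)(ρ−1)(λ+ρ)/(λ−ρ)². -/
open Complex

/-- The two-body potential of the hyperbolic Inozemtsev model in the P_V variables
λ = coth²(q/2), ρ = coth²(r/2). -/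
theorem two_body_potential_PV_variables
    (q r : ℂ)
    (hq : Complex.sinh (q / 2) ≠ 0) (hr : Complex.sinh (r / 2) ≠ 0)
    (hqr : Complex.sinh ((q - r) / 2) ≠ 0) (hqr' : Complex.sinh ((q + r) / 2) ≠ 0)
    (lam ρ : ℂ)
    (hlam : lam = (Complex.cosh (q / 2) / Complex.sinh (q / 2)) ^ 2)
    (hρ : ρ = (Complex.cosh (r / 2) / Complex.sinh (r / 2)) ^ 2) :
    lam ≠ ρ ∧
      1 / Complex.sinh ((q - r) / 2) ^ 2 + 1 / Complex.sinh ((q + r) / 2) ^ 2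
        = 2 * (lam - 1) * (ρ - 1) * (lam + ρ) / (lam - ρ) ^ 2 := by
  set sa := Complex.sinh (q / 2) with hsa
  set ca := Complex.cosh (q / 2) with hca0
  set sb := Complex.sinh (r / 2) with hsb
  set cb := Complex.cosh (r / 2) with hcb0
  have hca : ca ^ 2 = sa ^ 2 + 1 := Complex.cosh_sq _
  have hcb : cb ^ 2 = sb ^ 2 + 1 := Complex.cosh_sq _
  have hd : Complex.sinh ((q - r) / 2) = sa * cb - ca * sb := by
    rw [show (q - r) / 2 = q / 2 - r / 2 by ring, Complex.sinh_sub]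
  have hs : Complex.sinh ((q + r) / 2) = sa * cb + ca * sb := by
    rw [show (q + r) / 2 = q / 2 + r / 2 by ring, Complex.sinh_add]
  have hdiff : lam - ρ = -(Complex.sinh ((q - r) / 2) * Complex.sinh ((q + r) / 2))
      / (sa * sb) ^ 2 := by
    rw [hlam, hρ, hd, hs]
    field_simp
    ring
  have hne : lam - ρ ≠ 0 := by
    rw [hdiff]
    apply div_ne_zero
    · simpa using mul_ne_zero hqr hqr'
    · exact pow_ne_zero _ (mul_ne_zero hq hr)
  refine ⟨sub_ne_zero.mp hne, ?_⟩
  have hl1 : lam - 1 = 1 / sa ^ 2 := by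
    rw [hlam]; field_simp; linear_combination hca
  have hr1 : ρ - 1 = 1 / sb ^ 2 := by
    rw [hρ]; field_simp; linear_combination hcb
  have hprod : Complex.sinh ((q - r) / 2) * Complex.sinh ((q + r) / 2)
      = -((lam - ρ) * (sa * sb) ^ 2) := by
    rw [hdiff]; field_simp
  have hsum2 : Complex.sinh ((q - r) / 2) ^ 2 + Complex.sinh ((q + r) / 2) ^ 2
      = 2 * (lam + ρ) * (sa * sb) ^ 2 := by
    rw [hd, hs, hlam, hρ]; field_simp; ring
  have step : 1 / Complex.sinh ((q - r) / 2) ^ 2 + 1 / Complex.sinh ((q + r) / 2) ^ 2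
      = (Complex.sinh ((q - r) / 2) ^ 2 + Complex.sinh ((q + r) / 2) ^ 2)
        / (Complex.sinh ((q - r) / 2) * Complex.sinh ((q + r) / 2)) ^ 2 := by
    field_simp
    ring
  rw [step, hsum2, hprod, hl1, hr1]
  have hsab : sa * sb ≠ 0 := mul_ne_zero hq hr
  field_simp
end
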